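/- Let T denote the operator sending a function g : ℝ → ℝ to the function y ↦ y²·g′(y). Let n ≥ 0 be a natural number and x a nonzero real number. Then e^{−x} · [the n-th iterate of T applied to the function y ↦ e^y·(y^{2n})⁻¹, evaluated at y = x] equals Σ_{k=0}^{n} ((n+k)!/((n−k)!·k!)) · (−1/x)^k, i.e. it equals the Bessel polynomial B_n evaluated at −2/x. -/

import Mathlib

open Real Finset

noncomputable def bc (n m k : ℕ) : ℝ :=
  (-1 : ℝ) ^ k * (m.choose k : ℝ) * ∏ j ∈ range k, ((2 * n : ℝ) - m + j + 1)

lemma bc_rec (n m k : ℕ) :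
    bc n (m + 1) (k + 1)
      = bc n m (k + 1) + ((2 * (m : ℝ) - 2 * n - k)) * bc n m k := by
  have hP : ∏ j ∈ range (k+1), ((2 * n : ℝ) - (↑(m+1) : ℝ) + j + 1)
      = ((2*n : ℝ) - m) * ∏ j ∈ range k, ((2 * n : ℝ) - m + j + 1) := by
    induction k with
    | zero => push_cast; ring_nf; simp
    | succ k ih =>
        rw [prod_range_succ, ih, prod_range_succ]
        push_cast
        ring
  have hch : ((k:ℝ) + 1) * (m.choose (k+1) : ℝ) = ((m:ℝ) - k) * (m.choose k : ℝ) := by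
    rcases lt_or_ge k m with h | h
    · have h2 := congrArg (Nat.cast (R := ℝ)) (Nat.choose_succ_right_eq m k)
      push_cast [Nat.cast_sub h.le] at h2
      linarith
    · rcases eq_or_lt_of_le h with rfl | h'
      · simp [Nat.choose_succ_self]
      · simp [Nat.choose_eq_zero_of_lt h', Nat.choose_eq_zero_of_lt (by omega : m < k+1)]
  have hpas : (((m+1).choose (k+1) : ℕ) : ℝ) = (m.choose k : ℝ) + (m.choose (k+1) : ℝ) := by
    push_cast [Nat.choose_succ_succ]
    ring
  unfold bc
  rw [hP, hpas, prod_range_succ]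
  linear_combination ((-1:ℝ)^k * ∏ j ∈ range k, ((2 * n : ℝ) - m + j + 1)) * hch

lemma bc_zero (n m : ℕ) : bc n m 0 = 1 := by simp [bc]

lemma bc_top (n m : ℕ) : bc n m (m + 1) = 0 := by simp [bc, Nat.choose_succ_self]

lemma sum_step (n m : ℕ) (y : ℝ) :
    ∑ k ∈ range (m + 2), bc n (m + 1) k * y ^ (2 * ((m : ℤ) + 1) - 2 * n - k)
      = ∑ k ∈ range (m + 1),
          (bc n m k * y ^ (2 * (m : ℤ) - 2 * n - k + 2)
            + bc n m k * ((2 * (m : ℝ) - 2 * n - k)) * y ^ (2 * (m : ℤ) - 2 * n - k + 1)) := by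
  rw [Finset.sum_range_succ']
  have e1 : ∀ k : ℕ, (2 * ((m : ℤ) + 1) - 2 * n - (k + 1 : ℕ)) = 2 * (m : ℤ) - 2 * n - k + 1 := by
    intro k; push_cast; ring
  have e2 : (2 * ((m : ℤ) + 1) - 2 * n - (0 : ℕ)) = 2 * (m : ℤ) - 2 * n - (0:ℕ) + 2 := by
    push_cast; ring
  simp only [bc_rec, e1, e2, add_mul, bc_zero, one_mul]
  rw [Finset.sum_add_distrib]
  have h3 : ∑ k ∈ range (m+1), bc n m (k+1) * y ^ (2 * (m : ℤ) - 2 * n - k + 1)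
      = ∑ k ∈ range (m+1), bc n m (k+1) * y ^ (2 * (m : ℤ) - 2 * n - (k+1:ℕ) + 2) := by
    apply Finset.sum_congr rfl
    intro k _
    congr 1
    push_cast; ring_nf
  rw [h3, Finset.sum_add_distrib]
  have h4 : ∑ k ∈ range (m+1), bc n m (k+1) * y ^ (2 * (m : ℤ) - 2 * n - (k+1:ℕ) + 2)
        + 1 * y ^ (2 * (m : ℤ) - 2 * n - (0:ℕ) + 2)
      = ∑ k ∈ range (m+2), bc n m k * y ^ (2 * (m : ℤ) - 2 * n - k + 2) := by
    rw [Finset.sum_range_succ' (fun k => bc n m k * y ^ (2 * (m : ℤ) - 2 * n - k + 2)) (m+1),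
      bc_zero]
  have h5 : ∑ k ∈ range (m+2), bc n m k * y ^ (2 * (m : ℤ) - 2 * n - k + 2)
      = ∑ k ∈ range (m+1), bc n m k * y ^ (2 * (m : ℤ) - 2 * n - k + 2) := by
    rw [Finset.sum_range_succ, bc_top]
    ring
  calc _ = ∑ k ∈ range (m+1), bc n m (k+1) * y ^ (2 * (m : ℤ) - 2 * n - (k+1:ℕ) + 2)
        + 1 * y ^ (2 * (m : ℤ) - 2 * n - (0:ℕ) + 2)
        + ∑ k ∈ range (m+1), (2 * (m:ℝ) - 2 * n - k) * bc n m k * y ^ (2 * (m : ℤ) - 2 * n - k + 1) := by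
          ring
    _ = _ := by
          rw [h4, h5]
          congr 1
          exact Finset.sum_congr rfl (fun k _ => by ring)

lemma key (n : ℕ) : ∀ m : ℕ, m ≤ n → ∀ y : ℝ, y ≠ 0 →
    ((fun g : ℝ → ℝ => fun y : ℝ => y ^ 2 * deriv g y)^[m]
        (fun y : ℝ => Real.exp y * (y ^ (2 * n))⁻¹)) y
      = Real.exp y * ∑ k ∈ range (m + 1), bc n m k * y ^ (2 * (m : ℤ) - 2 * n - k) := by
  intro m
  induction m with
  | zero =>
      intro _ y hy
      simp [bc, zpow_neg, ← zpow_natCast y (2*n)]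
  | succ m ih =>
      intro hm y hy
      have hm' : m ≤ n := Nat.le_of_succ_le hm
      rw [Function.iterate_succ_apply']
      have hev : ((fun g : ℝ → ℝ => fun y : ℝ => y ^ 2 * deriv g y)^[m]
          (fun y : ℝ => Real.exp y * (y ^ (2 * n))⁻¹))
          =ᶠ[nhds y] (fun y => Real.exp y *
            ∑ k ∈ range (m + 1), bc n m k * y ^ (2 * (m : ℤ) - 2 * n - k)) := by
        filter_upwards [IsOpen.mem_nhds isOpen_compl_singleton
          (by simpa using hy : y ∈ ({0}ᶜ : Set ℝ))] with z hz
        exact ih hm' z (by simpa using hz)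
      have hS : HasDerivAt (fun y : ℝ => ∑ k ∈ range (m + 1),
          bc n m k * y ^ (2 * (m : ℤ) - 2 * n - k))
          (∑ k ∈ range (m + 1),
            bc n m k * (((2 * (m : ℤ) - 2 * n - k : ℤ) : ℝ) *
              y ^ (2 * (m : ℤ) - 2 * n - k - 1))) y := by
        apply HasDerivAt.fun_sum
        intro k _
        exact (hasDerivAt_zpow _ y (Or.inl hy)).const_mul _
      have hg := (Real.hasDerivAt_exp y).fun_mul hS
      simp only [Filter.EventuallyEq.deriv_eq hev, hg.deriv]
      have h2 : (2 : ℤ) * ((m : ℤ) + 1) - 2 * n = 2 * ((m+1 : ℕ) : ℤ) - 2 * n := by push_cast; ring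
      rw [show ((m : ℕ) + 1 + 1) = (m + 1) + 1 from rfl]
      push_cast [sum_step n m y] at *
      simp only [mul_add, Finset.mul_sum, ← Finset.sum_add_distrib]
      apply Finset.sum_congr rfl
      intro k _
      have hz1 : y ^ (2:ℕ) * y ^ (2 * (m : ℤ) - 2 * n - k) = y ^ (2 * (m : ℤ) - 2 * n - k + 2) := by
        rw [← zpow_natCast y 2, ← zpow_add₀ hy]
        congr 1
        push_cast; ring
      have hz2 : y ^ (2:ℕ) * y ^ (2 * (m : ℤ) - 2 * n - k - 1)
          = y ^ (2 * (m : ℤ) - 2 * n - k + 1) := by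
        rw [← zpow_natCast y 2, ← zpow_add₀ hy]
        congr 1
        push_cast; ring
      rw [← hz1, ← hz2]
      ring

lemma prod_fact (n : ℕ) : ∀ k : ℕ, (n.factorial * ∏ j ∈ range k, (n + 1 + j)) = (n + k).factorial
  | 0 => by simp
  | k + 1 => by
      rw [prod_range_succ, ← mul_assoc, prod_fact n k, ← Nat.add_assoc, Nat.factorial_succ]
      ring

/-- Let `T` send `g` to `y ↦ y²·g′(y)`. Then
`e^{−x}·(Tⁿ (y ↦ e^y·(y^{2n})⁻¹)) x = Σ_{k=0}^{n} ((n+k)!/((n−k)!·k!))·(−1/x)^k = B_n(−2/x)`. -/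
theorem bessel_via_x_sq_D (n : ℕ) (x : ℝ) (hx : x ≠ 0) :
    Real.exp (-x) *
        ((fun g : ℝ → ℝ => fun y : ℝ => y ^ 2 * deriv g y)^[n]
          (fun y : ℝ => Real.exp y * (y ^ (2 * n))⁻¹)) x =
      ∑ k ∈ Finset.range (n + 1),
        (((n + k).factorial : ℝ) / (((n - k).factorial : ℝ) * (k.factorial : ℝ))) *
          (-1 / x) ^ k := by
  rw [key n n le_rfl x hx, ← mul_assoc, ← Real.exp_add]
  simp only [neg_add_cancel, Real.exp_zero, one_mul]
  apply Finset.sum_congr rfl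
  intro k hk
  have hk' : k ≤ n := by simpa using Nat.lt_succ_iff.mp (Finset.mem_range.mp hk)
  have hE : (2 * (n : ℤ) - 2 * n - k) = -(k : ℤ) := by ring
  rw [hE]
  have hprod : (∏ j ∈ range k, ((2 * n : ℝ) - n + j + 1))
      = ((∏ j ∈ range k, (n + 1 + j) : ℕ) : ℝ) := by
    push_cast
    apply Finset.prod_congr rfl
    intro j _
    ring
  have hcoef : bc n n k = (-1:ℝ)^k * (((n + k).factorial : ℝ) / (((n - k).factorial : ℝ) * (k.factorial : ℝ))) := by
    unfold bc
    rw [hprod]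
    have h1 : ((n.choose k : ℕ) : ℝ) * ((∏ j ∈ range k, (n + 1 + j) : ℕ) : ℝ)
        = ((n + k).factorial : ℝ) / (((n - k).factorial : ℝ) * (k.factorial : ℝ)) := by
      have h2 : n.choose k * (∏ j ∈ range k, (n + 1 + j)) * ((n - k).factorial * k.factorial)
          = (n + k).factorial := by
        have h3 := prod_fact n k
        have h4 := Nat.choose_mul_factorial_mul_factorial hk'
        calc n.choose k * (∏ j ∈ range k, (n + 1 + j)) * ((n - k).factorial * k.factorial)
            = (n.choose k * k.factorial * (n-k).factorial) * (∏ j ∈ range k, (n + 1 + j)) := by ring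
          _ = n.factorial * ∏ j ∈ range k, (n + 1 + j) := by rw [h4]
          _ = (n + k).factorial := h3
      have h5 := congrArg (Nat.cast (R := ℝ)) h2
      push_cast at h5
      field_simp
      push_cast
      linarith
    rw [mul_assoc, h1]
  rw [hcoef, zpow_neg, zpow_natCast, div_pow]
  ring
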